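/- arXiv:2111.08586 — 7 statements merged into one kernel-verified Lean document; each statement's English description precedes it below -/
import Mathlib

section
/- For any subset B in S_D (where S_D is defined inductively: S_0 = {∅}, S_1 = {∅, {[1,1]}}, and for D ≥ 2, B ∈ S_D iff B = ∅ or B = t_i(B') for some i ∈ [1,D] and B' ∈ S_{D-2}), any two intervals I, Ĩ in B satisfy: either I = Ĩ, or I and Ĩ are non-touching (separated by a gap of at least 2), or I is strictly nested inside Ĩ, or Ĩ is strictly nested inside I. -/
open Finset

abbrev Vec := ℕ →₀ ZMod 2

/-- The basis vector `e_i`. -/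
noncomputable def e (i : ℕ) : Vec := Finsupp.single i 1

/-- For an interval `p = (a,b)` (representing `[a,b]`), the vector `e_I = ∑_{i∈[a,b]} e_i`. -/
noncomputable def eI (p : ℕ × ℕ) : Vec := ∑ j ∈ Finset.Icc p.1 p.2, e j

/-- The map `ξ_i` on intervals. -/
def tint (i : ℕ) (p : ℕ × ℕ) : ℕ × ℕ :=
  if i ≤ p.1 then (p.1 + 2, p.2 + 2)
  else if p.2 + 2 ≤ i then p
  else (p.1, p.2 + 2)

/-- The map `t_i` on sets of intervals: `t_i(B') = ξ_i(B') ∪ {[i,i]}`. -/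
def tmap (i : ℕ) (B : Finset (ℕ × ℕ)) : Finset (ℕ × ℕ) :=
  B.image (tint i) ∪ {(i, i)}

/-- The inductively defined family `S_D`. -/
inductive IsS : ℕ → Finset (ℕ × ℕ) → Prop
  | empty (D : ℕ) : IsS D ∅
  | one : IsS 1 {(1, 1)}
  | step (D i : ℕ) (B' : Finset (ℕ × ℕ)) (h1 : 1 ≤ i) (h2 : i ≤ D + 2)
      (h : IsS D B') : IsS (D + 2) (tmap i B')

def primEven (D k : ℕ) : Finset (ℕ × ℕ) := (Finset.Icc 1 k).image fun j => (j, D + 1 - j)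
def primOddA (D k : ℕ) : Finset (ℕ × ℕ) := (Finset.Icc 1 k).image fun j => (j, D - j)
def primOddB (D k : ℕ) : Finset (ℕ × ℕ) := (Finset.Icc 1 k).image fun j => (j + 1, D + 1 - j)

/-- The primitive elements of `𝕊_D`. -/
def IsPrim (D : ℕ) (B : Finset (ℕ × ℕ)) : Prop :=
  B = ∅ ∨
  (Even D ∧ ∃ k, 1 ≤ k ∧ k ≤ D / 2 ∧ B = primEven D k) ∨
  (Odd D ∧ ∃ k, Odd k ∧ 1 ≤ k ∧ k ≤ (D - 1) / 2 ∧ (B = primOddA D k ∨ B = primOddB D k))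

/-- The inductively defined family `𝕊_D`. -/
inductive IsSS : ℕ → Finset (ℕ × ℕ) → Prop
  | prim (D : ℕ) (B : Finset (ℕ × ℕ)) : IsPrim D B → IsSS D B
  | one : IsSS 1 {(1, 1)}
  | step (D i : ℕ) (B' : Finset (ℕ × ℕ)) (h1 : 1 ≤ i) (h2 : i ≤ D + 2)
      (h : IsSS D B') : IsSS (D + 2) (tmap i B')

/-- The subspace `𝔼_B` spanned by the `e_I`, `I ∈ B`. -/
noncomputable def EB (B : Finset (ℕ × ℕ)) : Submodule (ZMod 2) Vec :=
  Submodule.span (ZMod 2) (eI '' (B : Set (ℕ × ℕ)))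

/-- Two intervals are non-touching. -/
def Nontouch (p q : ℕ × ℕ) : Prop := p.2 + 2 ≤ q.1 ∨ q.2 + 2 ≤ p.1

/-- `p ≺ q`: `p = [a,b]` is strictly nested inside `q = [a',b']`, i.e. `a' < a ≤ b < b'`. -/
def Nested (p q : ℕ × ℕ) : Prop := q.1 < p.1 ∧ p.1 ≤ p.2 ∧ p.2 < q.2

/-- `η_D = e_1 + e_3 + ⋯ + e_D` (`D` odd). -/
noncomputable def eta (D : ℕ) : Vec := ∑ j ∈ (Finset.Icc 1 D).filter (fun j => j % 2 = 1), e j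

noncomputable def Tfun (i k : ℕ) : Vec :=
  if k + 1 < i then e k
  else if k + 1 = i then e k + e (k + 1) + e (k + 2)
  else e (k + 2)

/-- The linear map `T_i : V_{D-2} → V_D`. -/
noncomputable def Tlin (i : ℕ) : Vec →ₗ[ZMod 2] Vec :=
  Finsupp.linearCombination (ZMod 2) (Tfun i)

/-- The inductively defined family `𝒻(V_D)` of subspaces. -/
inductive IsF : ℕ → Submodule (ZMod 2) Vec → Prop
  | zero (D : ℕ) : IsF D ⊥
  | one : IsF 1 (Submodule.span (ZMod 2) {e 1})
  | step (D i : ℕ) (E' : Submodule (ZMod 2) Vec) (h1 : 1 ≤ i) (h2 : i ≤ D + 2)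
      (h : IsF D E') :
      IsF (D + 2) (Submodule.map (Tlin i) E' ⊔ Submodule.span (ZMod 2) {e i})

/-- The subspace `V_D = ⟨e_1,…,e_D⟩`. -/
noncomputable def VD (D : ℕ) : Submodule (ZMod 2) Vec :=
  Submodule.span (ZMod 2) (e '' Set.Icc 1 D)

/-- The symplectic form with `(e_i,e_j) = 1` iff `|i-j| = 1`. -/
noncomputable def symp (x y : Vec) : ZMod 2 :=
  x.sum fun i xi => xi * (y (i + 1) + if 1 ≤ i then y (i - 1) else 0)


lemma isS_bounds (D : ℕ) (B : Finset (ℕ × ℕ)) (hB : IsS D B) :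
    ∀ p ∈ B, 1 ≤ p.1 ∧ p.1 ≤ p.2 ∧ p.2 ≤ D := by
  induction hB with
  | empty D => simp
  | one => simp
  | step D i B' h1 h2 h ih =>
    intro p hp
    simp only [tmap, Finset.mem_union, Finset.mem_image, Finset.mem_singleton] at hp
    rcases hp with ⟨q, hq, rfl⟩ | rfl
    · obtain ⟨hq1, hq2, hq3⟩ := ih q hq
      obtain ⟨a, b⟩ := q
      simp only [tint]
      split_ifs <;> simp_all <;> omega
    · exact ⟨h1, le_refl _, h2⟩

lemma tint_rel (i : ℕ) (p q : ℕ × ℕ) (hp : 1 ≤ p.1 ∧ p.1 ≤ p.2) (hq : 1 ≤ q.1 ∧ q.1 ≤ q.2)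
    (h : p = q ∨ Nontouch p q ∨ Nested p q ∨ Nested q p) :
    tint i p = tint i q ∨ Nontouch (tint i p) (tint i q) ∨
      Nested (tint i p) (tint i q) ∨ Nested (tint i q) (tint i p) := by
  obtain ⟨a, b⟩ := p
  obtain ⟨c, d⟩ := q
  simp only [tint, Nontouch, Nested, Prod.mk.injEq, Prod.ext_iff] at *
  split_ifs <;> simp_all <;> try omega

lemma tint_ii (i : ℕ) (p : ℕ × ℕ) (hp : 1 ≤ p.1 ∧ p.1 ≤ p.2) :
    (i, i) = tint i p ∨ Nontouch (i, i) (tint i p) ∨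
      Nested (i, i) (tint i p) ∨ Nested (tint i p) (i, i) := by
  obtain ⟨a, b⟩ := p
  simp only [tint, Nontouch, Nested, Prod.mk.injEq, Prod.ext_iff] at *
  split_ifs <;> simp_all <;> try omega

/-- any two intervals of `B ∈ S_D` are equal, non-touching, or strictly nested. -/
theorem stmt0 (D : ℕ) (B : Finset (ℕ × ℕ)) (hB : IsS D B)
    (p q : ℕ × ℕ) (hp : p ∈ B) (hq : q ∈ B) :
    p = q ∨ Nontouch p q ∨ Nested p q ∨ Nested q p := by
  revert p q
  induction hB with
  | empty D => intro p q hp; simp at hp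
  | one =>
    intro p q hp hq
    simp only [Finset.mem_singleton] at hp hq
    subst hp; subst hq; left; rfl
  | step D i B' h1 h2 h ih =>
    intro p q hp hq
    have hbd := isS_bounds D B' h
    simp only [tmap, Finset.mem_union, Finset.mem_image, Finset.mem_singleton] at hp hq
    rcases hp with ⟨r, hr, rfl⟩ | rfl
    · rcases hq with ⟨s, hs, rfl⟩ | rfl
      · exact tint_rel i r s ⟨(hbd r hr).1, (hbd r hr).2.1⟩ ⟨(hbd s hs).1, (hbd s hs).2.1⟩
          (ih r s hr hs)
      · have := tint_ii i r ⟨(hbd r hr).1, (hbd r hr).2.1⟩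
        rcases this with h' | h' | h' | h'
        · exact Or.inl h'.symm
        · exact Or.inr (Or.inl (Or.symm h'))
        · exact Or.inr (Or.inr (Or.inr h'))
        · exact Or.inr (Or.inr (Or.inl h'))
    · rcases hq with ⟨s, hs, rfl⟩ | rfl
      · exact tint_ii i s ⟨(hbd s hs).1, (hbd s hs).2.1⟩
      · left; rfl
end

section
/- Let V_D be the 𝔽_2-vector space with basis {e_i : i ∈ [1,D]}, and for an interval I ⊆ [1,D] let e_I = Σ_{i∈I} e_i. Then for any B ∈ 𝕊_D (the inductively defined family of 'admissible' interval sets), the vectors {e_I : I ∈ B} are linearly independent in V_D. -/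
open Finset

lemma eI_apply (p : ℕ × ℕ) (m : ℕ) :
    eI p m = if p.1 ≤ m ∧ m ≤ p.2 then 1 else 0 := by
  have : eI p m = ∑ j ∈ Finset.Icc p.1 p.2, (e j) m := by
    simp [eI, Finsupp.finset_sum_apply]
  rw [this]
  simp only [e, Finsupp.single_apply]
  rw [Finset.sum_ite_eq' (Finset.Icc p.1 p.2) m (fun _ => (1 : ZMod 2))]
  simp [Finset.mem_Icc]

def Good (B : Finset (ℕ × ℕ)) : Prop :=
  (∀ p ∈ B, p.1 ≤ p.2) ∧ (∀ p ∈ B, ∀ q ∈ B, p.1 = q.1 → p = q)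

lemma good_indep (B : Finset (ℕ × ℕ)) (hG : Good B) :
    LinearIndependent (ZMod 2) (fun p : {x : ℕ × ℕ // x ∈ B} => eI p.1) := by
  obtain ⟨hprop, hinj⟩ := hG
  rw [linearIndependent_iff']
  intro s g hsum
  by_contra hc
  push_neg at hc
  obtain ⟨i0, hi0s, hgi0⟩ := hc
  obtain ⟨p, hps, hpmin⟩ := Finset.exists_min_image (s.filter fun i => g i ≠ 0)
    (fun i => i.1.1) ⟨i0, by simp [hi0s, hgi0]⟩
  rw [Finset.mem_filter] at hps
  have hval := congrArg (fun v : Vec => v p.1.1) hsum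
  simp only [Finsupp.finset_sum_apply, Finsupp.smul_apply, smul_eq_mul,
    Finsupp.coe_zero, Pi.zero_apply] at hval
  have hsingle : ∑ i ∈ s, g i * (eI i.1) p.1.1 = g p * (eI p.1) p.1.1 := by
    apply Finset.sum_eq_single p
    · intro i his hip
      rw [eI_apply]
      by_cases hgi : g i = 0
      · simp [hgi]
      · have hle : p.1.1 ≤ i.1.1 := hpmin i (Finset.mem_filter.2 ⟨his, hgi⟩)
        split_ifs with h
        · exact absurd (Subtype.ext (hinj i.1 i.2 p.1 p.2 (le_antisymm h.1 hle))) hip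
        · ring
    · intro h; exact absurd hps.1 h
  rw [hsingle, eI_apply, if_pos ⟨le_refl _, hprop p.1 p.2⟩, mul_one] at hval
  exact hps.2 hval

lemma good_tmap (i : ℕ) (B : Finset (ℕ × ℕ)) (h : Good B) : Good (tmap i B) := by
  obtain ⟨hp, hi⟩ := h
  constructor
  · intro p hmem
    rw [tmap, Finset.mem_union, Finset.mem_image, Finset.mem_singleton] at hmem
    rcases hmem with ⟨q, hq, rfl⟩ | rfl
    · have := hp q hq
      unfold tint
      split_ifs <;> simp <;> omega
    · simp
  · intro p hpm q hqm hpq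
    rw [tmap, Finset.mem_union, Finset.mem_image, Finset.mem_singleton] at hpm hqm
    rcases hpm with ⟨p', hp', rfl⟩ | rfl <;> rcases hqm with ⟨q', hq', rfl⟩ | rfl
    · have h1 : p'.1 = q'.1 := by
        unfold tint at hpq
        split_ifs at hpq <;> (try simp at hpq ⊢) <;> omega
      rw [hi p' hp' q' hq' h1]
    · exfalso
      unfold tint at hpq
      split_ifs at hpq <;> (try simp at hpq) <;> omega
    · exfalso
      unfold tint at hpq
      split_ifs at hpq <;> (try simp at hpq) <;> omega
    · rfl

lemma good_prim (D : ℕ) (B : Finset (ℕ × ℕ)) (h : IsPrim D B) : Good B := by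
  rcases h with rfl | ⟨hD, k, hk1, hk2, rfl⟩ | ⟨hD, k, hko, hk1, hk2, rfl | rfl⟩
  · exact ⟨fun p hp => absurd hp (by simp), fun p hp => absurd hp (by simp)⟩
  · constructor
    · intro p hp
      rw [primEven, Finset.mem_image] at hp
      obtain ⟨j, hj, rfl⟩ := hp
      rw [Finset.mem_Icc] at hj
      simp only
      omega
    · intro p hp q hq hpq
      rw [primEven, Finset.mem_image] at hp hq
      obtain ⟨j, hj, rfl⟩ := hp
      obtain ⟨j', hj', rfl⟩ := hq
      simp only at hpq
      subst hpq; rfl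
  · obtain ⟨r, hr⟩ := hD
    constructor
    · intro p hp
      rw [primOddA, Finset.mem_image] at hp
      obtain ⟨j, hj, rfl⟩ := hp
      rw [Finset.mem_Icc] at hj
      simp only
      omega
    · intro p hp q hq hpq
      rw [primOddA, Finset.mem_image] at hp hq
      obtain ⟨j, hj, rfl⟩ := hp
      obtain ⟨j', hj', rfl⟩ := hq
      simp only at hpq
      subst hpq; rfl
  · obtain ⟨r, hr⟩ := hD
    constructor
    · intro p hp
      rw [primOddB, Finset.mem_image] at hp
      obtain ⟨j, hj, rfl⟩ := hp
      rw [Finset.mem_Icc] at hj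
      simp only
      omega
    · intro p hp q hq hpq
      rw [primOddB, Finset.mem_image] at hp hq
      obtain ⟨j, hj, rfl⟩ := hp
      obtain ⟨j', hj', rfl⟩ := hq
      simp only at hpq
      have : j = j' := by omega
      subst this; rfl

lemma good_of_isSS (D : ℕ) (B : Finset (ℕ × ℕ)) (hB : IsSS D B) : Good B := by
  induction hB with
  | prim D B h => exact good_prim D B h
  | one =>
      refine ⟨?_, ?_⟩ <;> intro p hp <;> simp only [Finset.mem_singleton] at hp <;> subst hp
      · rfl
      · intro q hq _
        simp only [Finset.mem_singleton] at hq
        exact hq.symm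
  | step D i B' h1 h2 h ih => exact good_tmap i B' ih

/-- for `B ∈ 𝕊_D`, the vectors `{e_I : I ∈ B}` are linearly independent. -/
theorem stmt1 (D : ℕ) (B : Finset (ℕ × ℕ)) (hB : IsSS D B) :
    LinearIndependent (ZMod 2) (fun p : {x : ℕ × ℕ // x ∈ B} => eI p.1) := good_indep B (good_of_isSS D B hB)
end

section
/- For any B ∈ S_D, the cardinality of B equals Σ_{i=1}^{s} (c_i + 2)/2, where the union of all intervals in B decomposes uniquely as a disjoint union [a_1,b_1] ∪ ... ∪ [a_s,b_s] of maximal intervals (with a_{i+1} ≥ b_i + 2) each belonging to B, and c_i = b_i − a_i. -/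
open Finset

set_option linter.unreachableTactic false
set_option linter.unusedTactic false

def auxSig (B : Finset (ℕ × ℕ)) : Finset ℕ := B.biUnion fun p => Finset.Icc p.1 p.2
def auxLep (σ : Finset ℕ) : ℕ := (σ.filter fun x => x - 1 ∉ σ).card
def auxF (i x : ℕ) : ℕ := if x < i then x else x + 2

lemma auxF_inj (i : ℕ) : Function.Injective (auxF i) := by
  intro x y h; unfold auxF at h; split_ifs at h <;> omega

lemma mem_image_auxF {σ : Finset ℕ} {i y : ℕ} :
    y ∈ σ.image (auxF i) ↔ (y < i ∧ y ∈ σ) ∨ (i + 2 ≤ y ∧ y - 2 ∈ σ) := by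
  simp only [Finset.mem_image]
  constructor
  · rintro ⟨x, hx, rfl⟩
    unfold auxF; split_ifs with h
    · exact Or.inl ⟨h, hx⟩
    · exact Or.inr ⟨by omega, by simpa using hx⟩
  · rintro (⟨h1, h2⟩ | ⟨h1, h2⟩)
    · exact ⟨y, h2, by simp [auxF, h1]⟩
    · exact ⟨y - 2, h2, by unfold auxF; split_ifs <;> omega⟩

set_option maxHeartbeats 1000000 in
lemma shift_count (σ τ : Finset ℕ) (i : ℕ) (hi : 1 ≤ i)
    (hτ : ∀ y, y ∈ τ ↔ (y < i ∧ y ∈ σ) ∨ (i + 2 ≤ y ∧ y - 2 ∈ σ) ∨ y = i ∨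
      (y = i + 1 ∧ i - 1 ∈ σ)) :
    τ.card + auxLep τ = σ.card + auxLep σ + 2 := by
  have hτeq : τ = σ.image (auxF i) ∪ (if i - 1 ∈ σ then {i, i+1} else {i}) := by
    ext y
    rw [hτ y, Finset.mem_union, mem_image_auxF]
    by_cases hE : i - 1 ∈ σ <;> by_cases hA : y ∈ σ <;> by_cases hC : y - 2 ∈ σ <;>
      simp [hE, hA, hC] <;> omega
  have hii : i ∉ σ.image (auxF i) := by
    rw [mem_image_auxF]; rintro (⟨h, _⟩ | ⟨h, _⟩) <;> omega
  have hii1 : i + 1 ∉ σ.image (auxF i) := by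
    rw [mem_image_auxF]; rintro (⟨h, _⟩ | ⟨h, _⟩) <;> omega
  have hfilt : ∀ x, (x ∈ τ ∧ x - 1 ∉ τ) ↔
      ((x < i ∧ x ∈ σ ∧ x - 1 ∉ σ) ∨ (i + 2 ≤ x ∧ x - 2 ∈ σ ∧ x - 3 ∉ σ) ∨
        (x = i ∧ i - 1 ∉ σ)) := by
    intro x
    rw [hτ x, hτ (x - 1)]
    simp only [show x - 1 - 2 = x - 3 from by omega]
    rcases (by omega : x < i ∨ x = i ∨ x = i + 1 ∨ x = i + 2 ∨ x = i + 3 ∨ i + 4 ≤ x) with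
      hx | hx | hx | hx | hx | hx
    · by_cases hA : x ∈ σ <;> by_cases hB : x - 1 ∈ σ <;> by_cases hC : x - 2 ∈ σ <;>
        by_cases hD : x - 3 ∈ σ <;> by_cases hE : i - 1 ∈ σ <;>
        simp [hA, hB, hC, hD, hE] <;> omega
    · simp only [hx, show i - 1 - 1 = i - 2 from by omega, show i - 2 ∈ σ → i - 2 ∈ σ from id]
      by_cases hB : i - 1 ∈ σ <;> by_cases hA : i ∈ σ <;> by_cases hC : i - 2 ∈ σ <;>
        by_cases hD : i - 3 ∈ σ <;> simp [hA, hB, hC, hD] <;> omega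
    · simp only [hx, show i + 1 - 1 = i from by omega, show i + 1 - 2 = i - 1 from by omega,
        show i + 1 - 3 = i - 2 from by omega]
      by_cases hA : i + 1 ∈ σ <;> by_cases hB : i ∈ σ <;> by_cases hC : i - 1 ∈ σ <;>
        by_cases hD : i - 2 ∈ σ <;> simp [hA, hB, hC, hD] <;> omega
    · simp only [hx, show i + 2 - 1 = i + 1 from by omega, show i + 2 - 2 = i from by omega,
        show i + 2 - 3 = i - 1 from by omega]
      by_cases hA : i + 2 ∈ σ <;> by_cases hB : i + 1 ∈ σ <;> by_cases hC : i ∈ σ <;>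
        by_cases hD : i - 1 ∈ σ <;> simp [hA, hB, hC, hD] <;> omega
    · simp only [hx, show i + 3 - 1 = i + 2 from by omega, show i + 3 - 2 = i + 1 from by omega,
        show i + 3 - 3 = i from by omega, show i + 2 - 2 = i from by omega]
      by_cases hA : i + 3 ∈ σ <;> by_cases hB : i + 2 ∈ σ <;> by_cases hC : i + 1 ∈ σ <;>
        by_cases hD : i ∈ σ <;> by_cases hE : i - 1 ∈ σ <;> simp [hA, hB, hC, hD, hE] <;> omega
    · by_cases hA : x ∈ σ <;> by_cases hB : x - 1 ∈ σ <;> by_cases hC : x - 2 ∈ σ <;>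
        by_cases hD : x - 3 ∈ σ <;> by_cases hE : i - 1 ∈ σ <;>
        simp [hA, hB, hC, hD, hE] <;> omega
  have hfilteq : τ.filter (fun x => x - 1 ∉ τ)
      = ((σ.filter fun x => x - 1 ∉ σ).image (auxF i)) ∪ (if i - 1 ∈ σ then ∅ else {i}) := by
    ext x
    rw [Finset.mem_filter, hfilt x, Finset.mem_union, mem_image_auxF]
    simp only [Finset.mem_filter, show x - 2 - 1 = x - 3 from by omega]
    by_cases hE : i - 1 ∈ σ <;> simp [hE] <;> tauto
  have hiif : i ∉ (σ.filter fun x => x - 1 ∉ σ).image (auxF i) := by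
    rw [mem_image_auxF]; rintro (⟨h, _⟩ | ⟨h, _⟩) <;> omega
  by_cases hE : i - 1 ∈ σ
  · have c1 : τ.card = σ.card + 2 := by
      rw [hτeq, if_pos hE]
      rw [Finset.card_union_of_disjoint (by
        rw [Finset.disjoint_right]
        intro y hy
        simp only [Finset.mem_insert, Finset.mem_singleton] at hy
        rcases hy with rfl | rfl
        · exact hii
        · exact hii1)]
      rw [Finset.card_image_of_injective _ (auxF_inj i)]
      simp
    have c2 : auxLep τ = auxLep σ := by
      unfold auxLep
      rw [hfilteq, if_pos hE, Finset.union_empty,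
        Finset.card_image_of_injective _ (auxF_inj i)]
    omega
  · have c1 : τ.card = σ.card + 1 := by
      rw [hτeq, if_neg hE]
      rw [Finset.card_union_of_disjoint (by
        rw [Finset.disjoint_right]
        intro y hy
        simp only [Finset.mem_singleton] at hy
        subst hy; exact hii)]
      rw [Finset.card_image_of_injective _ (auxF_inj i)]
      simp
    have c2 : auxLep τ = auxLep σ + 1 := by
      unfold auxLep
      rw [hfilteq, if_neg hE]
      rw [Finset.card_union_of_disjoint (by
        rw [Finset.disjoint_right]
        intro y hy
        simp only [Finset.mem_singleton] at hy
        subst hy; exact hiif)]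
      rw [Finset.card_image_of_injective _ (auxF_inj i)]
      simp
    omega
lemma mem_auxSig {B : Finset (ℕ × ℕ)} {x : ℕ} :
    x ∈ auxSig B ↔ ∃ p ∈ B, p.1 ≤ x ∧ x ≤ p.2 := by
  simp [auxSig, Finset.mem_biUnion, Finset.mem_Icc]

lemma mem_auxSig_tmap {B : Finset (ℕ × ℕ)} {i : ℕ} (hi : 1 ≤ i)
    (hinv : ∀ p ∈ B, 1 ≤ p.1 ∧ p.1 ≤ p.2) (y : ℕ) :
    y ∈ auxSig (tmap i B) ↔
      (y < i ∧ y ∈ auxSig B) ∨ (i + 2 ≤ y ∧ y - 2 ∈ auxSig B) ∨ y = i ∨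
        (y = i + 1 ∧ i - 1 ∈ auxSig B) := by
  rw [mem_auxSig]
  simp only [tmap, Finset.mem_union, Finset.mem_image, Finset.mem_singleton]
  constructor
  · rintro ⟨p, hp, hy1, hy2⟩
    rcases hp with ⟨q, hq, rfl⟩ | rfl
    · have hq' := hinv q hq
      obtain ⟨qa, qb⟩ := q
      simp only [tint] at hy1 hy2
      split_ifs at hy1 hy2 with h1 h2
      · simp only at hy1 hy2 h1
        exact Or.inr (Or.inl ⟨by omega, mem_auxSig.2 ⟨(qa, qb), hq, by omega, by omega⟩⟩)
      · simp only at hy1 hy2 h1 h2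
        exact Or.inl ⟨by omega, mem_auxSig.2 ⟨(qa, qb), hq, hy1, hy2⟩⟩
      · simp only at hy1 hy2 h1 h2 hq'
        rcases (by omega : y < i ∨ y = i ∨ y = i + 1 ∨ i + 2 ≤ y) with h' | h' | h' | h'
        · exact Or.inl ⟨h', mem_auxSig.2 ⟨(qa, qb), hq, hy1, by omega⟩⟩
        · exact Or.inr (Or.inr (Or.inl h'))
        · exact Or.inr (Or.inr (Or.inr ⟨h', mem_auxSig.2 ⟨(qa, qb), hq, by omega, by omega⟩⟩))
        · exact Or.inr (Or.inl ⟨h', mem_auxSig.2 ⟨(qa, qb), hq, by omega, by omega⟩⟩)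
    · simp only at hy1 hy2
      exact Or.inr (Or.inr (Or.inl (by omega)))
  · rintro (⟨h1, h2⟩ | ⟨h1, h2⟩ | rfl | ⟨rfl, h2⟩)
    · obtain ⟨⟨qa, qb⟩, hq, hq1, hq2⟩ := mem_auxSig.1 h2
      refine ⟨tint i (qa, qb), Or.inl ⟨(qa, qb), hq, rfl⟩, ?_⟩
      simp only [tint]
      split_ifs <;> simp only <;> omega
    · obtain ⟨⟨qa, qb⟩, hq, hq1, hq2⟩ := mem_auxSig.1 h2
      refine ⟨tint i (qa, qb), Or.inl ⟨(qa, qb), hq, rfl⟩, ?_⟩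
      simp only [tint]
      split_ifs <;> simp only <;> omega
    · exact ⟨(y, y), Or.inr rfl, le_refl y, le_refl y⟩
    · obtain ⟨⟨qa, qb⟩, hq, hq1, hq2⟩ := mem_auxSig.1 h2
      refine ⟨tint i (qa, qb), Or.inl ⟨(qa, qb), hq, rfl⟩, ?_⟩
      simp only [tint]
      split_ifs <;> simp only <;> omega


lemma inv_tmap {B : Finset (ℕ × ℕ)} {i : ℕ} (hi : 1 ≤ i)
    (hinv : ∀ p ∈ B, 1 ≤ p.1 ∧ p.1 ≤ p.2 ∧ (p.2 - p.1) % 2 = 0) :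
    ∀ p ∈ tmap i B, 1 ≤ p.1 ∧ p.1 ≤ p.2 ∧ (p.2 - p.1) % 2 = 0 := by
  intro p hp
  rw [tmap, Finset.mem_union, Finset.mem_image] at hp
  rcases hp with ⟨⟨qa, qb⟩, hq, rfl⟩ | hp
  · have h := hinv _ hq
    simp only at h
    simp only [tint]
    split_ifs <;> simp only <;> omega
  · rw [Finset.mem_singleton] at hp
    subst hp
    simp only
    omega

lemma card_tmap {B : Finset (ℕ × ℕ)} {i : ℕ}
    (hinv : ∀ p ∈ B, 1 ≤ p.1 ∧ p.1 ≤ p.2) : (tmap i B).card = B.card + 1 := by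
  have hnot : (i, i) ∉ B.image (tint i) := by
    rw [Finset.mem_image]
    rintro ⟨⟨qa, qb⟩, hq, h⟩
    have := hinv _ hq
    simp only at this
    simp only [tint] at h
    split_ifs at h <;> rw [Prod.mk.injEq] at h <;> omega
  rw [tmap, Finset.card_union_of_disjoint (Finset.disjoint_singleton_right.2 hnot),
    Finset.card_image_of_injOn, Finset.card_singleton]
  intro p hp q hq h
  have h1 := hinv p hp
  have h2 := hinv q hq
  obtain ⟨pa, pb⟩ := p
  obtain ⟨qa, qb⟩ := q
  simp only at h1 h2
  simp only [tint] at h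
  rw [Prod.mk.injEq]
  split_ifs at h <;> rw [Prod.mk.injEq] at h <;> omega

lemma aux_key (D : ℕ) (B : Finset (ℕ × ℕ)) (hB : IsS D B) :
    (∀ p ∈ B, 1 ≤ p.1 ∧ p.1 ≤ p.2 ∧ (p.2 - p.1) % 2 = 0) ∧
      2 * B.card = (auxSig B).card + auxLep (auxSig B) := by
  induction hB with
  | empty D => exact ⟨by simp, by simp [auxSig, auxLep]⟩
  | one =>
      constructor
      · intro p hp
        rw [Finset.mem_singleton] at hp
        subst hp
        norm_num
      · have h1 : auxSig {((1 : ℕ), (1 : ℕ))} = {1} := by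
          rw [auxSig]
          rfl
        rw [h1]
        rw [auxLep]
        decide
  | step D i B' h1 h2 h ih =>
      obtain ⟨hinv, hcard⟩ := ih
      have hinv1 : ∀ p ∈ B', 1 ≤ p.1 ∧ p.1 ≤ p.2 := fun p hp =>
        ⟨(hinv p hp).1, (hinv p hp).2.1⟩
      refine ⟨inv_tmap h1 hinv, ?_⟩
      have hc := shift_count (auxSig B') (auxSig (tmap i B')) i h1
        (mem_auxSig_tmap h1 hinv1)
      have hct := card_tmap (i := i) hinv1
      omega


/-- `|B| = Σ_{i=1}^s (c_i+2)/2` for the decomposition of `σ = ∪_{I∈B} I`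
into maximal intervals `[a_i,b_i] ∈ B` with `b_i + 2 ≤ a_{i+1}`. -/
theorem stmt4 (D : ℕ) (B : Finset (ℕ × ℕ)) (hB : IsS D B)
    (s : ℕ) (a b : ℕ → ℕ)
    (hmem : ∀ i, 1 ≤ i → i ≤ s → (a i, b i) ∈ B)
    (hgap : ∀ i, 1 ≤ i → i + 1 ≤ s → b i + 2 ≤ a (i + 1))
    (hcover : B.biUnion (fun p => Finset.Icc p.1 p.2)
      = (Finset.Icc 1 s).biUnion (fun i => Finset.Icc (a i) (b i))) :
    B.card = ∑ i ∈ Finset.Icc 1 s, (b i - a i + 2) / 2 := by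
  obtain ⟨hinv, hcard⟩ := aux_key D B hB
  have hab : ∀ i, 1 ≤ i → i ≤ s → 1 ≤ a i ∧ a i ≤ b i ∧ (b i - a i) % 2 = 0 := by
    intro i h1 h2
    simpa using hinv _ (hmem i h1 h2)
  -- chained gaps
  have hgap' : ∀ j i, 1 ≤ i → i < j → j ≤ s → b i + 2 ≤ a j := by
    intro j
    induction j with
    | zero => omega
    | succ k ihk =>
        intro i h1 h2 h3
        rcases (by omega : i = k ∨ i < k) with rfl | hik
        · exact hgap i h1 (by omega)
        · have e1 := ihk i h1 hik (by omega)
          have e2 := hgap k (by omega) (by omega)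
          have e3 := (hab k (by omega) (by omega)).2.1
          omega
  have hσ : auxSig B = (Finset.Icc 1 s).biUnion (fun i => Finset.Icc (a i) (b i)) := hcover
  have hmemσ : ∀ x, x ∈ auxSig B ↔ ∃ j, (1 ≤ j ∧ j ≤ s) ∧ a j ≤ x ∧ x ≤ b j := by
    intro x
    rw [hσ]
    simp [Finset.mem_biUnion, Finset.mem_Icc]
  have hσcard : (auxSig B).card = ∑ i ∈ Finset.Icc 1 s, (b i - a i + 1) := by
    rw [hσ, Finset.card_biUnion]
    · refine Finset.sum_congr rfl fun i hi => ?_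
      rw [Finset.mem_Icc] at hi
      rw [Nat.card_Icc]
      have := (hab i hi.1 hi.2).2.1
      omega
    · intro x hx y hy hxy
      simp only [Finset.coe_Icc, Set.mem_Icc] at hx hy
      simp only [Function.onFun]; rw [Finset.disjoint_left]
      intro z hz1 hz2
      rw [Finset.mem_Icc] at hz1 hz2
      rcases lt_or_gt_of_ne hxy with hlt | hlt
      · have := hgap' y x hx.1 hlt hy.2
        omega
      · have := hgap' x y hy.1 hlt hx.2
        omega
  have hlep : auxLep (auxSig B) = s := by
    rw [auxLep]
    have hfe : (auxSig B).filter (fun x => x - 1 ∉ auxSig B) = (Finset.Icc 1 s).image a := by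
      ext x
      rw [Finset.mem_filter, Finset.mem_image]
      simp only [Finset.mem_Icc]
      rw [hmemσ x]
      constructor
      · rintro ⟨⟨j, hj, hj1, hj2⟩, hnot⟩
        refine ⟨j, hj, ?_⟩
        by_contra hne
        have hx1 : a j ≤ x - 1 := by omega
        have hx2 : x - 1 ≤ b j := by omega
        exact hnot ((hmemσ (x - 1)).2 ⟨j, hj, hx1, hx2⟩)
      · rintro ⟨j, hj, rfl⟩
        have habj := hab j hj.1 hj.2
        refine ⟨⟨j, hj, le_refl _, habj.2.1⟩, ?_⟩
        rw [hmemσ (a j - 1)]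
        rintro ⟨l, hl, hl1, hl2⟩
        rcases lt_trichotomy l j with hc | rfl | hc
        · have := hgap' j l hl.1 hc hj.2
          omega
        · omega
        · have := hgap' l j hj.1 hc hl.2
          have := (hab j hj.1 hj.2).2.1
          omega
    rw [hfe, Finset.card_image_of_injOn, Nat.card_Icc]
    · omega
    · intro x hx y hy hxy
      simp only [Finset.coe_Icc, Set.mem_Icc] at hx hy
      by_contra hne
      rcases lt_or_gt_of_ne hne with hc | hc
      · have := hgap' y x hx.1 hc hy.2
        have := (hab x hx.1 hx.2).2.1
        omega
      · have := hgap' x y hy.1 hc hx.2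
        have := (hab y hy.1 hy.2).2.1
        omega
  have hs2 : 2 * ∑ i ∈ Finset.Icc 1 s, (b i - a i + 2) / 2
      = ∑ i ∈ Finset.Icc 1 s, (b i - a i + 1) + s := by
    rw [Finset.mul_sum]
    have : ∑ i ∈ Finset.Icc 1 s, 2 * ((b i - a i + 2) / 2)
        = ∑ i ∈ Finset.Icc 1 s, ((b i - a i + 1) + 1) := by
      refine Finset.sum_congr rfl fun i hi => ?_
      rw [Finset.mem_Icc] at hi
      have := (hab i hi.1 hi.2).2.2
      omega
    have e1 : ∑ i ∈ Finset.Icc 1 s, ((b i - a i + 1) + 1)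
        = ∑ i ∈ Finset.Icc 1 s, (b i - a i + 1) + ∑ _i ∈ Finset.Icc 1 s, 1 :=
      Finset.sum_add_distrib
    have e2 : ∑ _i ∈ Finset.Icc 1 s, 1 = s := by
      rw [Finset.sum_const, smul_eq_mul, mul_one, Nat.card_Icc]
      omega
    omega
  omega
end

section
/- Let B be a set of intervals in [1,D], each of odd length. Then B ∈ S_D if and only if B satisfies: (P₀) any two intervals in B are equal, non-touching, or strictly nested; and (P₁) whenever [a,b] ∈ B and c ∈ ℕ satisfies a < c < b with c ≢ a (mod 2), there exists [a₁,b₁] ∈ B with a < a₁ ≤ c ≤ b₁ < b. -/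
open Finset

def untint (i : ℕ) (p : ℕ × ℕ) : ℕ × ℕ :=
  if p.2 + 2 ≤ i then p else if i + 2 ≤ p.1 then (p.1 - 2, p.2 - 2) else (p.1, p.2 - 2)

lemma untint_tint (i : ℕ) (p : ℕ × ℕ) (hle : p.1 ≤ p.2) : untint i (tint i p) = p := by
  obtain ⟨a, b⟩ := p
  simp only [tint, untint]
  split_ifs <;> simp_all [Prod.ext_iff] <;> omega

lemma tint_untint (i : ℕ) (p : ℕ × ℕ)
    (hs : p.2 + 2 ≤ i ∨ i + 2 ≤ p.1 ∨ (p.1 < i ∧ i < p.2))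
    (h1 : 1 ≤ p.1) (h2 : p.1 ≤ p.2) (h3 : (p.2 - p.1) % 2 = 0) :
    tint i (untint i p) = p := by
  obtain ⟨a, b⟩ := p
  simp only [tint, untint] at *
  split_ifs <;> simp_all [Prod.ext_iff] <;> omega

lemma rel_tint_iff (i : ℕ) (p q : ℕ × ℕ) (hp1 : 1 ≤ p.1) (hp : p.1 ≤ p.2)
    (hq1 : 1 ≤ q.1) (hq : q.1 ≤ q.2) (hpp : (p.2 - p.1) % 2 = 0) (hqq : (q.2 - q.1) % 2 = 0) :
    (tint i p = tint i q ∨ Nontouch (tint i p) (tint i q) ∨ Nested (tint i p) (tint i q) ∨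
      Nested (tint i q) (tint i p)) ↔
    (p = q ∨ Nontouch p q ∨ Nested p q ∨ Nested q p) := by
  obtain ⟨a, b⟩ := p
  obtain ⟨c, d⟩ := q
  simp only [tint, Nontouch, Nested, Prod.ext_iff] at *
  split_ifs <;> simp_all <;> omega

lemma rel_tint_self (i : ℕ) (p : ℕ × ℕ) (hp : p.1 ≤ p.2) :
    Nontouch (tint i p) (i, i) ∨ Nested (i, i) (tint i p) := by
  obtain ⟨a, b⟩ := p
  simp only [tint, Nontouch, Nested] at *
  split_ifs <;> simp_all <;> omega


lemma tint_cases (i a b : ℕ) :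
    (i ≤ a ∧ tint i (a, b) = (a + 2, b + 2)) ∨
    (a < i ∧ b + 2 ≤ i ∧ tint i (a, b) = (a, b)) ∨
    (a < i ∧ i < b + 2 ∧ tint i (a, b) = (a, b + 2)) := by
  simp only [tint]
  split_ifs <;> simp_all <;> omega

lemma mem_tmap {i : ℕ} {B : Finset (ℕ × ℕ)} {p : ℕ × ℕ} :
    p ∈ tmap i B ↔ (∃ q ∈ B, tint i q = p) ∨ p = (i, i) := by
  rw [tmap, Finset.mem_union, Finset.mem_image, Finset.mem_singleton]

lemma isS_valid {D : ℕ} {B : Finset (ℕ × ℕ)} (h : IsS D B) :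
    ∀ p ∈ B, 1 ≤ p.1 ∧ p.1 ≤ p.2 ∧ p.2 ≤ D ∧ (p.2 - p.1) % 2 = 0 := by
  induction h with
  | empty D => simp
  | one => simp
  | step D i B' h1 h2 h ih =>
    intro p hp
    rcases mem_tmap.mp hp with ⟨q, hq, rfl⟩ | rfl
    · obtain ⟨x1, x2, x3, x4⟩ := ih q hq
      obtain ⟨a, b⟩ := q
      rcases tint_cases i a b with ⟨hi, teq⟩ | ⟨hi1, hi2, teq⟩ | ⟨hi1, hi2, teq⟩ <;>
        rw [teq] <;> dsimp only at * <;> omega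
    · exact ⟨h1, le_rfl, by omega, by omega⟩


lemma isS_P {D : ℕ} {B : Finset (ℕ × ℕ)} (h : IsS D B) :
    (∀ p ∈ B, ∀ q ∈ B, p = q ∨ Nontouch p q ∨ Nested p q ∨ Nested q p) ∧
    (∀ p ∈ B, ∀ c : ℕ, p.1 < c → c < p.2 → c % 2 ≠ p.1 % 2 →
      ∃ q ∈ B, p.1 < q.1 ∧ q.1 ≤ c ∧ c ≤ q.2 ∧ q.2 < p.2) := by
  induction h with
  | empty D => simp
  | one =>
    constructor
    · intro p hp q hq
      simp only [Finset.mem_singleton] at hp hq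
      subst hp; subst hq; left; rfl
    · intro p hp c hc1 hc2 hc3
      simp only [Finset.mem_singleton] at hp
      subst hp; dsimp only at hc1 hc2; omega
  | step D i B' h1 h2 h ih =>
    have hv := isS_valid h
    obtain ⟨ih0, ih1⟩ := ih
    constructor
    · intro p hp q hq
      rcases mem_tmap.mp hp with ⟨p0, hp0, rfl⟩ | rfl
      · rcases mem_tmap.mp hq with ⟨q0, hq0, rfl⟩ | rfl
        · obtain ⟨a1, a2, a3, a4⟩ := hv p0 hp0
          obtain ⟨b1, b2, b3, b4⟩ := hv q0 hq0
          exact (rel_tint_iff i p0 q0 a1 a2 b1 b2 a4 b4).mpr (ih0 p0 hp0 q0 hq0)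
        · rcases rel_tint_self i p0 (hv p0 hp0).2.1 with h' | h'
          · exact Or.inr (Or.inl h')
          · exact Or.inr (Or.inr (Or.inr h'))
      · rcases mem_tmap.mp hq with ⟨q0, hq0, rfl⟩ | rfl
        · rcases rel_tint_self i q0 (hv q0 hq0).2.1 with h' | h'
          · exact Or.inr (Or.inl (Or.symm h'))
          · exact Or.inr (Or.inr (Or.inl h'))
        · left; rfl
    · intro p hp c hc1 hc2 hc3
      rcases mem_tmap.mp hp with ⟨⟨a, b⟩, hp0, rfl⟩ | rfl
      swap
      · dsimp only at hc1 hc2; omega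
      obtain ⟨a1, a2, a3, a4⟩ := hv _ hp0
      dsimp only at a1 a2 a3 a4
      by_cases hsp : a < i ∧ c = i
      · refine ⟨(i, i), mem_tmap.mpr (Or.inr rfl), ?_⟩
        rcases tint_cases i a b with ⟨hi, teq⟩ | ⟨hi1, hi2, teq⟩ | ⟨hi1, hi2, teq⟩ <;>
          rw [teq] at hc1 hc2 ⊢ <;> dsimp only at hc1 hc2 ⊢ <;> omega
      · rcases tint_cases i a b with ⟨hi, teq⟩ | ⟨hi1, hi2, teq⟩ | ⟨hi1, hi2, teq⟩ <;>
          rw [teq] at hc1 hc2 hc3 ⊢ <;> dsimp only at hc1 hc2 hc3 ⊢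
        · -- i ≤ a, p = (a+2, b+2), use c - 2
          obtain ⟨⟨a', b'⟩, hq0, hb⟩ := ih1 (a, b) hp0 (c - 2) (by omega) (by omega) (by omega)
          dsimp only at hb
          refine ⟨tint i (a', b'), mem_tmap.mpr (Or.inl ⟨_, hq0, rfl⟩), ?_⟩
          rcases tint_cases i a' b' with ⟨ji, jeq⟩ | ⟨j1, j2, jeq⟩ | ⟨j1, j2, jeq⟩ <;>
            rw [jeq] <;> dsimp only <;> omega
        · -- b + 2 ≤ i, p = (a, b), use c
          obtain ⟨⟨a', b'⟩, hq0, hb⟩ := ih1 (a, b) hp0 c (by omega) (by omega) (by omega)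
          dsimp only at hb
          refine ⟨tint i (a', b'), mem_tmap.mpr (Or.inl ⟨_, hq0, rfl⟩), ?_⟩
          rcases tint_cases i a' b' with ⟨ji, jeq⟩ | ⟨j1, j2, jeq⟩ | ⟨j1, j2, jeq⟩ <;>
            rw [jeq] <;> dsimp only <;> omega
        · -- a < i < b + 2, p = (a, b + 2)
          rcases Nat.lt_or_ge c i with hci | hci
          · -- c < i, use c
            obtain ⟨⟨a', b'⟩, hq0, hb⟩ := ih1 (a, b) hp0 c (by omega) (by omega) (by omega)
            dsimp only at hb
            refine ⟨tint i (a', b'), mem_tmap.mpr (Or.inl ⟨_, hq0, rfl⟩), ?_⟩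
            rcases tint_cases i a' b' with ⟨ji, jeq⟩ | ⟨j1, j2, jeq⟩ | ⟨j1, j2, jeq⟩ <;>
              rw [jeq] <;> dsimp only <;> omega
          · -- c > i (c = i excluded by hsp), use c - 2
            obtain ⟨⟨a', b'⟩, hq0, hb⟩ := ih1 (a, b) hp0 (c - 2) (by omega) (by omega) (by omega)
            dsimp only at hb
            refine ⟨tint i (a', b'), mem_tmap.mpr (Or.inl ⟨_, hq0, rfl⟩), ?_⟩
            rcases tint_cases i a' b' with ⟨ji, jeq⟩ | ⟨j1, j2, jeq⟩ | ⟨j1, j2, jeq⟩ <;>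
              rw [jeq] <;> dsimp only <;> omega


lemma P_isS : ∀ D : ℕ, ∀ B : Finset (ℕ × ℕ),
    (∀ p ∈ B, 1 ≤ p.1 ∧ p.1 ≤ p.2 ∧ p.2 ≤ D) →
    (∀ p ∈ B, (p.2 - p.1) % 2 = 0) →
    (∀ p ∈ B, ∀ q ∈ B, p = q ∨ Nontouch p q ∨ Nested p q ∨ Nested q p) →
    (∀ p ∈ B, ∀ c : ℕ, p.1 < c → c < p.2 → c % 2 ≠ p.1 % 2 →
      ∃ q ∈ B, p.1 < q.1 ∧ q.1 ≤ c ∧ c ≤ q.2 ∧ q.2 < p.2) →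
    IsS D B := by
  intro D
  induction D using Nat.strong_induction_on with
  | _ D IH =>
  intro B hint hodd hP0 hP1
  rcases eq_or_ne B ∅ with rfl | hne
  · exact IsS.empty D
  obtain ⟨p, hpB, hmin⟩ :=
    Finset.exists_min_image B (fun p => p.2 - p.1) (Finset.nonempty_iff_ne_empty.mpr hne)
  have hpv := hint p hpB
  have hsing : p.1 = p.2 := by
    by_contra hne2
    have hodp := hodd p hpB
    obtain ⟨q, hqB, hq⟩ := hP1 p hpB (p.1 + 1) (by omega) (by omega) (by omega)
    have h1 := hmin q hqB
    have h2 := (hint q hqB).2.1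
    omega
  obtain ⟨i, j⟩ := p
  dsimp only at hsing hpv
  subst hsing
  rcases D with _ | _ | d
  · omega
  · have hB : B = {(1, 1)} := by
      apply Finset.eq_singleton_iff_unique_mem.mpr
      refine ⟨?_, ?_⟩
      · have : i = 1 := by omega
        subst this; exact hpB
      · intro x hx
        have h := hint x hx
        obtain ⟨x1, x2⟩ := x
        dsimp only at h
        have : x1 = 1 ∧ x2 = 1 := by omega
        simp [this.1, this.2]
    rw [hB]; exact IsS.one
  · -- D = d + 2
    have h1i : 1 ≤ i := hpv.1
    have hiD : i ≤ d + 2 := hpv.2.2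
    have hsep : ∀ q ∈ B, q ≠ (i, i) → q.2 + 2 ≤ i ∨ i + 2 ≤ q.1 ∨ (q.1 < i ∧ i < q.2) := by
      intro q hq hneq
      have hqv := hint q hq
      rcases hP0 q hq (i, i) hpB with h | h | h | h
      · exact absurd h hneq
      · simp only [Nontouch] at h; omega
      · simp only [Nested] at h; omega
      · simp only [Nested] at h; omega
    set B' := (B.erase (i, i)).image (untint i) with hB'
    have hmemB' : ∀ q' ∈ B', ∃ q ∈ B, q ≠ (i, i) ∧ untint i q = q' ∧ tint i q' = q := by
      intro q' hq'
      simp only [hB', Finset.mem_image, Finset.mem_erase] at hq'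
      obtain ⟨q, ⟨hne2, hqB⟩, rfl⟩ := hq'
      exact ⟨q, hqB, hne2, rfl,
        tint_untint i q (hsep q hqB hne2) (hint q hqB).1 (hint q hqB).2.1 (hodd q hqB)⟩
    have hBtmap : B = tmap i B' := by
      ext r
      rw [mem_tmap]
      constructor
      · intro hr
        by_cases h : r = (i, i)
        · right; exact h
        · left
          refine ⟨untint i r, ?_, tint_untint i r (hsep r hr h) (hint r hr).1 (hint r hr).2.1
            (hodd r hr)⟩
          simp only [hB', Finset.mem_image]
          exact ⟨r, Finset.mem_erase.mpr ⟨h, hr⟩, rfl⟩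
      · rintro (⟨q, hq, rfl⟩ | rfl)
        · obtain ⟨r, hrB, hner, hur, htr⟩ := hmemB' q hq
          rw [htr]; exact hrB
        · exact hpB
    have hvB' : ∀ q' ∈ B', (1 ≤ q'.1 ∧ q'.1 ≤ q'.2 ∧ q'.2 ≤ d) ∧ (q'.2 - q'.1) % 2 = 0 := by
      intro q' hq'
      obtain ⟨q, hqB, hne2, hun, htq⟩ := hmemB' q' hq'
      have h1 := hint q hqB
      have h2 := hodd q hqB
      have h3 := hsep q hqB hne2
      obtain ⟨a, b⟩ := q
      subst hun
      dsimp only at h1 h2 h3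
      simp only [untint]
      split_ifs <;> dsimp only <;> omega
    have hP0' : ∀ p' ∈ B', ∀ q' ∈ B', p' = q' ∨ Nontouch p' q' ∨ Nested p' q' ∨ Nested q' p' := by
      intro p' hp' q' hq'
      obtain ⟨p, hpB2, hnep, hup, htp⟩ := hmemB' p' hp'
      obtain ⟨q, hqB2, hneq, huq, htq⟩ := hmemB' q' hq'
      have hv1 := hvB' p' hp'
      have hv2 := hvB' q' hq'
      have hrel := hP0 p hpB2 q hqB2
      rw [← htp, ← htq] at hrel
      exact (rel_tint_iff i p' q' hv1.1.1 hv1.1.2.1 hv2.1.1 hv2.1.2.1 hv1.2 hv2.2).mp hrel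
    have hP1' : ∀ p' ∈ B', ∀ c : ℕ, p'.1 < c → c < p'.2 → c % 2 ≠ p'.1 % 2 →
        ∃ q' ∈ B', p'.1 < q'.1 ∧ q'.1 ≤ c ∧ c ≤ q'.2 ∧ q'.2 < p'.2 := by
      intro p' hp' c hc1 hc2 hc3
      obtain ⟨p, hpB2, hnep, hup, htp⟩ := hmemB' p' hp'
      obtain ⟨⟨hv1, hv2, hv3⟩, hv4⟩ := hvB' p' hp'
      obtain ⟨a, b⟩ := p'
      dsimp only at hv1 hv2 hv3 hv4 hc1 hc2 hc3
      subst htp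
      clear hup
      have sepp := hsep _ hpB2 hnep
      -- choose c' = c or c + 2
      have main : ∀ c' : ℕ, (c < i → c' = c) → (i ≤ c → c' = c + 2) →
          (tint i (a, b)).1 < c' → c' < (tint i (a, b)).2 → c' % 2 ≠ (tint i (a, b)).1 % 2 →
          ∃ q' ∈ B', a < q'.1 ∧ q'.1 ≤ c ∧ c ≤ q'.2 ∧ q'.2 < b := by
        intro c' hlt hge mc1 mc2 mc3
        obtain ⟨q, hqB2, hb1, hb2, hb3, hb4⟩ := hP1 _ hpB2 c' mc1 mc2 mc3
        have hneq : q ≠ (i, i) := by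
          intro h
          subst h
          dsimp only at hb2 hb3
          rcases Nat.lt_or_ge c i with h' | h'
          · rw [hlt h'] at hb2; omega
          · rw [hge h'] at hb2 hb3; omega
        have hs := hsep q hqB2 hneq
        refine ⟨untint i q, ?_, ?_⟩
        · simp only [hB', Finset.mem_image]
          exact ⟨q, Finset.mem_erase.mpr ⟨hneq, hqB2⟩, rfl⟩
        · have hcc : (c < i ∧ c' = c) ∨ (i ≤ c ∧ c' = c + 2) := by
            rcases Nat.lt_or_ge c i with h' | h'
            · exact Or.inl ⟨h', hlt h'⟩
            · exact Or.inr ⟨h', hge h'⟩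
          obtain ⟨u, v⟩ := q
          dsimp only at hb1 hb2 hb3 hb4 hs
          rcases tint_cases i a b with ⟨ji, jeq⟩ | ⟨j1, j2, jeq⟩ | ⟨j1, j2, jeq⟩ <;>
            rw [jeq] at hb1 hb4 <;> dsimp only at hb1 hb4 <;>
            simp only [untint] <;> split_ifs <;> dsimp only <;> omega
      rcases tint_cases i a b with ⟨ji, jeq⟩ | ⟨j1, j2, jeq⟩ | ⟨j1, j2, jeq⟩
      · exact main (c + 2) (by omega) (fun _ => rfl) (by rw [jeq]; dsimp only; omega)
          (by rw [jeq]; dsimp only; omega) (by rw [jeq]; dsimp only; omega)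
      · exact main c (fun _ => rfl) (by omega) (by rw [jeq]; dsimp only; omega)
          (by rw [jeq]; dsimp only; omega) (by rw [jeq]; dsimp only; omega)
      · rcases Nat.lt_or_ge c i with hci | hci
        · exact main c (fun _ => rfl) (by omega) (by rw [jeq]; dsimp only; omega)
            (by rw [jeq]; dsimp only; omega) (by rw [jeq]; dsimp only; omega)
        · exact main (c + 2) (by omega) (fun _ => rfl) (by rw [jeq]; dsimp only; omega)
            (by rw [jeq]; dsimp only; omega) (by rw [jeq]; dsimp only; omega)
    rw [hBtmap]
    exact IsS.step d i B' h1i hiD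
      (IH d (by omega) B' (fun q hq => (hvB' q hq).1) (fun q hq => (hvB' q hq).2) hP0' hP1')


/-- a set of odd-length intervals in `[1,D]` is in `S_D` iff it satisfies
`(P₀)` and `(P₁)`. -/
theorem stmt6 (D : ℕ) (B : Finset (ℕ × ℕ))
    (hint : ∀ p ∈ B, 1 ≤ p.1 ∧ p.1 ≤ p.2 ∧ p.2 ≤ D)
    (hodd : ∀ p ∈ B, (p.2 - p.1) % 2 = 0) :
    IsS D B ↔
      ((∀ p ∈ B, ∀ q ∈ B, p = q ∨ Nontouch p q ∨ Nested p q ∨ Nested q p) ∧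
       (∀ p ∈ B, ∀ c : ℕ, p.1 < c → c < p.2 → c % 2 ≠ p.1 % 2 →
         ∃ q ∈ B, p.1 < q.1 ∧ q.1 ≤ c ∧ c ≤ q.2 ∧ q.2 < p.2)) := by
  constructor
  · exact fun h => isS_P h
  · rintro ⟨h0, h1⟩
    exact P_isS D B hint hodd h0 h1
end

section
/- Let D be odd and B ∈ S_D with |B| < (D−1)/2 and σ = ∪_{I∈B} I. Then there exist x < y < z in [1,D] \ σ with x, z odd and y even. -/
open Finset

lemma card_tmap_s11 (i : ℕ) (B' : Finset (ℕ × ℕ)) : (tmap i B').card = B'.card + 1 := by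
  have hinj : Set.InjOn (tint i) B' := by
    intro p _ q _ hpq
    rcases p with ⟨a, b⟩; rcases q with ⟨c, d⟩
    simp only [tint] at hpq
    split_ifs at hpq <;> simp_all [Prod.ext_iff] <;> omega
  have hnot : (i, i) ∉ B'.image (tint i) := by
    simp only [Finset.mem_image, not_exists, not_and]
    rintro ⟨a, b⟩ _ hab
    simp only [tint] at hab
    split_ifs at hab <;> simp_all [Prod.ext_iff] <;> omega
  rw [tmap, Finset.union_comm, ← Finset.insert_eq, Finset.card_insert_of_notMem hnot,
    Finset.card_image_of_injOn hinj]

lemma phi_avoid (i : ℕ) (B' : Finset (ℕ × ℕ)) (c : ℕ)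
    (hc : c ∉ B'.biUnion (fun p => Finset.Icc p.1 p.2)) :
    (if c < i then c else c + 2) ∉ (tmap i B').biUnion (fun p => Finset.Icc p.1 p.2) := by
  simp only [Finset.mem_biUnion, not_exists, not_and, Finset.mem_Icc] at hc ⊢
  intro q hq
  simp only [tmap, Finset.mem_union, Finset.mem_image, Finset.mem_singleton] at hq
  rcases hq with ⟨p, hp, rfl⟩ | rfl
  · have := hc p hp
    simp only [tint]
    split_ifs <;> omega
  · split_ifs <;> omega


/-- `D` odd, `B ∈ S_D`, `|B| < (D−1)/2` implies there are `x < y < z`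
in `[1,D] \ σ` with `x, z` odd and `y` even. -/
theorem stmt11 (D : ℕ) (hD : Odd D) (B : Finset (ℕ × ℕ)) (hB : IsS D B)
    (h : B.card < (D - 1) / 2) :
    ∃ x y z : ℕ, x < y ∧ y < z ∧ Odd x ∧ Even y ∧ Odd z ∧
      x ∈ Finset.Icc 1 D ∧ y ∈ Finset.Icc 1 D ∧ z ∈ Finset.Icc 1 D ∧
      x ∉ B.biUnion (fun p => Finset.Icc p.1 p.2) ∧
      y ∉ B.biUnion (fun p => Finset.Icc p.1 p.2) ∧
      z ∉ B.biUnion (fun p => Finset.Icc p.1 p.2) := by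
  rw [Nat.odd_iff] at hD
  induction hB with
  | empty D =>
      have hD3 : 3 ≤ D := by omega
      exact ⟨1, 2, 3, by norm_num, by norm_num, by decide, by decide, by decide,
        by rw [Finset.mem_Icc]; omega, by rw [Finset.mem_Icc]; omega,
        by rw [Finset.mem_Icc]; omega, by simp, by simp, by simp⟩
  | one => simp at h
  | step D i B' h1 h2 hB' ih =>
      have hcard : B'.card < (D - 1) / 2 := by
        rw [card_tmap_s11] at h; omega
      obtain ⟨x, y, z, hxy, hyz, hox, hey, hoz, hx, hy, hz, hnx, hny, hnz⟩ :=
        ih (by omega) hcard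
      rw [Finset.mem_Icc] at hx hy hz
      rw [Nat.odd_iff] at hox hoz
      rw [Nat.even_iff] at hey
      refine ⟨if x < i then x else x + 2, if y < i then y else y + 2,
        if z < i then z else z + 2, ?_, ?_, ?_, ?_, ?_, ?_, ?_, ?_,
        phi_avoid i B' x hnx, phi_avoid i B' y hny, phi_avoid i B' z hnz⟩ <;>
        (try simp only [Finset.mem_Icc, Nat.odd_iff, Nat.even_iff]) <;> split_ifs <;> omega
end

section
/- There is a unique symplectic (alternating bilinear) form (,) on V_D over 𝔽_2 with (e_i, e_j) = 1 if |i−j| = 1 and 0 otherwise. For any B ∈ 𝕊_D, the form (,) vanishes identically on 𝔼_B × 𝔼_B. -/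
open Finset

-- auxiliary development, to be inserted before stmt13

noncomputable def myL (i : ℕ) : Vec →ₗ[ZMod 2] ZMod 2 :=
  Finsupp.lapply (i + 1) + (if 1 ≤ i then Finsupp.lapply (i - 1) else 0)

noncomputable def F : Vec →ₗ[ZMod 2] Vec →ₗ[ZMod 2] ZMod 2 :=
  Finsupp.linearCombination (ZMod 2) myL

lemma F_e (i j : ℕ) :
    F (e i) (e j) = (if j = i + 1 then (1 : ZMod 2) else 0) + (if i = j + 1 then 1 else 0) := by
  unfold F e
  rw [Finsupp.linearCombination_single, one_smul]
  unfold myL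
  rw [LinearMap.add_apply]
  simp only [Finsupp.lapply_apply, Finsupp.single_apply]
  by_cases h : 1 ≤ i
  · rw [if_pos h, Finsupp.lapply_apply, Finsupp.single_apply]
    congr 1
    split_ifs <;> first | rfl | omega
  · rw [if_neg h, LinearMap.zero_apply]
    have : ¬ (i = j + 1) := by omega
    rw [if_neg this]

lemma F_single (a c : ℕ) (b d : ZMod 2) :
    F (Finsupp.single a b) (Finsupp.single c d) = b * d * F (e a) (e c) := by
  have h1 : Finsupp.single a b = b • e a := by
    rw [e, Finsupp.smul_single, smul_eq_mul, mul_one]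
  have h2 : Finsupp.single c d = d • e c := by
    rw [e, Finsupp.smul_single, smul_eq_mul, mul_one]
  simp only [h1, h2, map_smul, LinearMap.smul_apply, smul_eq_mul]
  ring

lemma F_symm (x y : Vec) : F x y = F y x := by
  have h : F = F.flip := by
    apply Finsupp.lhom_ext
    intro a b
    apply Finsupp.lhom_ext
    intro c d
    show F (Finsupp.single a b) (Finsupp.single c d) = F (Finsupp.single c d) (Finsupp.single a b)
    rw [F_single, F_single, F_e, F_e]
    ring
  calc F x y = F.flip x y := by rw [← h]
    _ = F y x := rfl

lemma F_e_diag (a : ℕ) : F (e a) (e a) = 0 := by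
  rw [F_e, if_neg (by omega)]
  simp

lemma F_alt (x : Vec) : F x x = 0 := by
  induction x using Finsupp.induction with
  | zero => simp
  | single_add a b x _ _ ih =>
    have hsq : F (Finsupp.single a b) (Finsupp.single a b) = 0 := by
      rw [F_single, F_e_diag, mul_zero]
    have hcross : F (Finsupp.single a b) x + F x (Finsupp.single a b) = 0 := by
      rw [F_symm x (Finsupp.single a b)]
      exact CharTwo.add_self_eq_zero _
    simp only [map_add, LinearMap.add_apply]
    linear_combination hsq + ih + hcross

lemma F_eI (p q : ℕ × ℕ) :
    F (eI p) (eI q) = ∑ i ∈ Finset.Icc p.1 p.2, ∑ j ∈ Finset.Icc q.1 q.2, F (e i) (e j) := by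
  simp only [eI, map_sum, LinearMap.sum_apply]
  exact Finset.sum_comm

lemma F_nontouch (p q : ℕ × ℕ) (h : p.2 + 2 ≤ q.1) : F (eI p) (eI q) = 0 := by
  rw [F_eI]
  apply Finset.sum_eq_zero
  intro i hi
  apply Finset.sum_eq_zero
  intro j hj
  simp only [Finset.mem_Icc] at hi hj
  rw [F_e, if_neg (by omega), if_neg (by omega), add_zero]

lemma F_nested (p q : ℕ × ℕ) (h : Nested p q) : F (eI p) (eI q) = 0 := by
  obtain ⟨h1, h2, h3⟩ := h
  rw [F_eI]
  apply Finset.sum_eq_zero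
  intro i hi
  simp only [Finset.mem_Icc] at hi
  have hi1 : 1 ≤ i := by omega
  have hrw : (∑ j ∈ Finset.Icc q.1 q.2, F (e i) (e j))
      = ∑ j ∈ Finset.Icc q.1 q.2,
        ((if j = i + 1 then (1 : ZMod 2) else 0) + (if j = i - 1 then 1 else 0)) := by
    apply Finset.sum_congr rfl
    intro j _
    rw [F_e]
    congr 1
    split_ifs <;> first | rfl | omega
  rw [hrw, Finset.sum_add_distrib, Finset.sum_ite_eq', Finset.sum_ite_eq',
    if_pos (by simp only [Finset.mem_Icc]; omega), if_pos (by simp only [Finset.mem_Icc]; omega)]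
  decide

lemma tint_fst (i : ℕ) (p : ℕ × ℕ) : (tint i p).1 = if i ≤ p.1 then p.1 + 2 else p.1 := by
  unfold tint
  split_ifs <;> rfl

lemma tint_snd (i : ℕ) (p : ℕ × ℕ) (hp : p.1 ≤ p.2) :
    (tint i p).2 = if i ≤ p.2 + 1 then p.2 + 2 else p.2 := by
  unfold tint
  split_ifs <;> first | rfl | omega

def IRel (p q : ℕ × ℕ) : Prop := p = q ∨ Nontouch p q ∨ Nested p q ∨ Nested q p

lemma rel_symm {p q : ℕ × ℕ} (h : IRel p q) : IRel q p := by
  unfold IRel Nontouch at *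
  tauto

lemma tint_good (i : ℕ) (p : ℕ × ℕ) (hp : 1 ≤ p.1 ∧ p.1 ≤ p.2) :
    1 ≤ (tint i p).1 ∧ (tint i p).1 ≤ (tint i p).2 := by
  rw [tint_fst, tint_snd i p hp.2]
  split_ifs <;> omega

lemma rel_tint (i : ℕ) (p q : ℕ × ℕ) (hp : p.1 ≤ p.2) (hq : q.1 ≤ q.2) (h : IRel p q) :
    IRel (tint i p) (tint i q) := by
  rcases h with rfl | h | h | h
  · exact Or.inl rfl
  · right
    simp only [Nontouch, Nested] at h ⊢
    rw [tint_fst i p, tint_snd i p hp, tint_fst i q, tint_snd i q hq]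
    split_ifs <;> omega
  · right
    simp only [Nontouch, Nested] at h ⊢
    rw [tint_fst i p, tint_snd i p hp, tint_fst i q, tint_snd i q hq]
    split_ifs <;> omega
  · right
    simp only [Nontouch, Nested] at h ⊢
    rw [tint_fst i p, tint_snd i p hp, tint_fst i q, tint_snd i q hq]
    split_ifs <;> omega

lemma rel_ii (i : ℕ) (q : ℕ × ℕ) (hq : 1 ≤ q.1 ∧ q.1 ≤ q.2) : IRel (i, i) (tint i q) := by
  right
  simp only [Nontouch, Nested]
  rw [tint_fst i q, tint_snd i q hq.2]
  split_ifs <;> omega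

lemma good_of_isSS_s13 (D : ℕ) (B : Finset (ℕ × ℕ)) (h : IsSS D B) :
    (∀ p ∈ B, 1 ≤ p.1 ∧ p.1 ≤ p.2) ∧ ∀ p ∈ B, ∀ q ∈ B, IRel p q := by
  induction h with
  | prim D B hp =>
    rcases hp with rfl | ⟨hD, k, hk1, hk2, rfl⟩ | ⟨hD, k, hkodd, hk1, hk2, hB⟩
    · simp
    · obtain ⟨m, hm⟩ := hD
      constructor
      · intro p hp
        simp only [primEven, Finset.mem_image, Finset.mem_Icc] at hp
        obtain ⟨j, hj, rfl⟩ := hp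
        simp only
        omega
      · intro p hp q hq
        simp only [primEven, Finset.mem_image, Finset.mem_Icc] at hp hq
        obtain ⟨j, hj, rfl⟩ := hp
        obtain ⟨j', hj', rfl⟩ := hq
        unfold IRel Nontouch Nested
        simp only [Prod.mk.injEq]
        omega
    · obtain ⟨m, hm⟩ := hD
      rcases hB with rfl | rfl
      · constructor
        · intro p hp
          simp only [primOddA, Finset.mem_image, Finset.mem_Icc] at hp
          obtain ⟨j, hj, rfl⟩ := hp
          simp only
          obtain ⟨c, hc⟩ := hkodd
          omega
        · intro p hp q hq
          simp only [primOddA, Finset.mem_image, Finset.mem_Icc] at hp hq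
          obtain ⟨j, hj, rfl⟩ := hp
          obtain ⟨j', hj', rfl⟩ := hq
          unfold IRel Nontouch Nested
          simp only [Prod.mk.injEq]
          obtain ⟨c, hc⟩ := hkodd
          omega
      · constructor
        · intro p hp
          simp only [primOddB, Finset.mem_image, Finset.mem_Icc] at hp
          obtain ⟨j, hj, rfl⟩ := hp
          simp only
          obtain ⟨c, hc⟩ := hkodd
          omega
        · intro p hp q hq
          simp only [primOddB, Finset.mem_image, Finset.mem_Icc] at hp hq
          obtain ⟨j, hj, rfl⟩ := hp
          obtain ⟨j', hj', rfl⟩ := hq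
          unfold IRel Nontouch Nested
          simp only [Prod.mk.injEq]
          obtain ⟨c, hc⟩ := hkodd
          omega
  | one =>
    constructor
    · intro p hp
      simp only [Finset.mem_singleton] at hp
      subst hp
      simp
    · intro p hp q hq
      simp only [Finset.mem_singleton] at hp hq
      subst hp; subst hq
      exact Or.inl rfl
  | step D i B' h1 h2 h ih =>
    obtain ⟨ihg, ihr⟩ := ih
    have hmem : ∀ p ∈ tmap i B', p = (i, i) ∨ ∃ p' ∈ B', p = tint i p' := by
      intro p hp
      simp only [tmap, Finset.mem_union, Finset.mem_image, Finset.mem_singleton] at hp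
      rcases hp with ⟨p', hp', rfl⟩ | rfl
      · exact Or.inr ⟨p', hp', rfl⟩
      · exact Or.inl rfl
    constructor
    · intro p hp
      rcases hmem p hp with rfl | ⟨p', hp', rfl⟩
      · exact ⟨h1, le_refl _⟩
      · exact tint_good i p' (ihg p' hp')
    · intro p hp q hq
      rcases hmem p hp with rfl | ⟨p', hp', rfl⟩ <;> rcases hmem q hq with rfl | ⟨q', hq', rfl⟩
      · exact Or.inl rfl
      · exact rel_ii i q' (ihg q' hq')
      · exact rel_symm (rel_ii i p' (ihg p' hp'))
      · exact rel_tint i p' q' (ihg p' hp').2 (ihg q' hq').2 (ihr p' hp' q' hq')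

lemma F_pair_zero (p q : ℕ × ℕ) (h : IRel p q) : F (eI p) (eI q) = 0 := by
  rcases h with rfl | h | h | h
  · exact F_alt _
  · rcases h with h | h
    · exact F_nontouch p q h
    · rw [F_symm]; exact F_nontouch q p h
  · exact F_nested p q h
  · rw [F_symm]; exact F_nested q p h

lemma bilin_eq_on_span {f g : Vec →ₗ[ZMod 2] Vec →ₗ[ZMod 2] ZMod 2} {S T : Set Vec}
    (h : ∀ s ∈ S, ∀ t ∈ T, f s t = g s t) :
    ∀ x ∈ Submodule.span (ZMod 2) S, ∀ y ∈ Submodule.span (ZMod 2) T, f x y = g x y := by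
  intro x hx
  induction hx using Submodule.span_induction with
  | mem s hs =>
    intro y hy
    induction hy using Submodule.span_induction with
    | mem t ht => exact h s hs t ht
    | zero => simp
    | add y z _ _ ihy ihz => rw [map_add, map_add, ihy, ihz]
    | smul a y _ ihy => rw [map_smul, map_smul, ihy]
  | zero => intro y _; simp
  | add x z _ _ ihx ihz =>
    intro y hy
    rw [map_add, map_add, LinearMap.add_apply, LinearMap.add_apply, ihx y hy, ihz y hy]
  | smul a x _ ihx =>
    intro y hy
    rw [map_smul, map_smul, LinearMap.smul_apply, LinearMap.smul_apply, ihx y hy]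

/-- there is a unique alternating bilinear form on `V_D` with
`(e_i,e_j) = 1` iff `|i−j| = 1`, and it vanishes identically on `𝔼_B × 𝔼_B` for any
`B ∈ 𝕊_D`. -/
theorem stmt13 (D : ℕ) :
    ∃ f : Vec →ₗ[ZMod 2] Vec →ₗ[ZMod 2] ZMod 2,
      (∀ x, f x x = 0) ∧
      (∀ i j, 1 ≤ i → i ≤ D → 1 ≤ j → j ≤ D →
        f (e i) (e j) = if i + 1 = j ∨ j + 1 = i then 1 else 0) ∧
      (∀ g : Vec →ₗ[ZMod 2] Vec →ₗ[ZMod 2] ZMod 2,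
        (∀ x, g x x = 0) →
        (∀ i j, 1 ≤ i → i ≤ D → 1 ≤ j → j ≤ D →
          g (e i) (e j) = if i + 1 = j ∨ j + 1 = i then 1 else 0) →
        ∀ x ∈ VD D, ∀ y ∈ VD D, f x y = g x y) ∧
      (∀ B : Finset (ℕ × ℕ), IsSS D B → ∀ x ∈ EB B, ∀ y ∈ EB B, f x y = 0) := by
  have hF2 : ∀ i j : ℕ, 1 ≤ i → i ≤ D → 1 ≤ j → j ≤ D →
      F (e i) (e j) = if i + 1 = j ∨ j + 1 = i then 1 else 0 := by
    intro i j _ _ _ _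
    rw [F_e]
    split_ifs <;> first | (exfalso; omega) | simp
  refine ⟨F, F_alt, hF2, ?_, ?_⟩
  · intro g _ gval x hx y hy
    refine bilin_eq_on_span ?_ x hx y hy
    rintro s ⟨i, hi, rfl⟩ t ⟨j, hj, rfl⟩
    rw [hF2 i j hi.1 hi.2 hj.1 hj.2, gval i j hi.1 hi.2 hj.1 hj.2]
  · intro B hB x hx y hy
    have hg := good_of_isSS_s13 D B hB
    have key : ∀ s ∈ eI '' (B : Set (ℕ × ℕ)), ∀ t ∈ eI '' (B : Set (ℕ × ℕ)),
        F s t = (0 : Vec →ₗ[ZMod 2] Vec →ₗ[ZMod 2] ZMod 2) s t := by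
      rintro s ⟨p, hp, rfl⟩ t ⟨q, hq, rfl⟩
      simp only [LinearMap.zero_apply]
      exact F_pair_zero p q (hg.2 p (Finset.mem_coe.mp hp) q (Finset.mem_coe.mp hq))
    have := bilin_eq_on_span key x hx y hy
    simpa using this
end

section
/- For D ≥ 2 and i ∈ [1,D], the injective linear map T_i : V_{D-2} → V_D preserves the symplectic form: (T_i(x), T_i(y)) = (x, y) for all x, y ∈ V_{D-2}. -/
open Finset

lemma symp_zero_left (y : Vec) : symp 0 y = 0 := by simp [symp]

lemma symp_zero_right (x : Vec) : symp x 0 = 0 := by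
  unfold symp
  simp

lemma symp_add_left (x x' y : Vec) : symp (x + x') y = symp x y + symp x' y := by
  unfold symp
  exact Finsupp.sum_add_index (by intros; simp) (by intros; ring)

lemma symp_add_right (x y y' : Vec) : symp x (y + y') = symp x y + symp x y' := by
  unfold symp
  rw [← Finsupp.sum_add]
  apply Finsupp.sum_congr
  intro i _
  simp only [Finsupp.add_apply]
  split_ifs <;> ring

lemma symp_e_e (a b : ℕ) :
    symp (e a) (e b) = if (a + 1 = b ∨ (1 ≤ a ∧ b + 1 = a)) then 1 else 0 := by
  unfold symp e
  rw [Finsupp.sum_single_index (by simp)]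
  simp only [Finsupp.single_apply, one_mul]
  split_ifs <;> first | decide | (exfalso; omega)

set_option maxHeartbeats 1600000 in
lemma symp_core (i k l : ℕ) : symp (Tfun i k) (Tfun i l) = symp (e k) (e l) := by
  unfold Tfun
  split_ifs <;>
    simp only [symp_add_left, symp_add_right, symp_e_e] <;>
    split_ifs <;> first | decide | (exfalso; omega)

lemma Tlin_e (i a : ℕ) : Tlin i (e a) = Tfun i a := by
  unfold Tlin e
  rw [Finsupp.linearCombination_single, one_smul]

lemma zmod2_cases (c : ZMod 2) : c = 0 ∨ c = 1 := by revert c; decide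

lemma symp_Tlin (i : ℕ) (x y : Vec) : symp (Tlin i x) (Tlin i y) = symp x y := by
  induction x using Finsupp.induction_linear with
  | zero => simp [symp_zero_left]
  | add f g hf hg => rw [map_add, symp_add_left, symp_add_left, hf, hg]
  | single a c =>
    induction y using Finsupp.induction_linear with
    | zero => simp [symp_zero_right]
    | add f g hf hg => rw [map_add, symp_add_right, symp_add_right, hf, hg]
    | single b d =>
      rcases zmod2_cases c with hc | hc <;> rcases zmod2_cases d with hd | hd <;>
          subst hc <;> subst hd
      · simp [symp_zero_left, symp_zero_right]
      · simp [symp_zero_left, symp_zero_right]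
      · simp [symp_zero_left, symp_zero_right]
      · have ha : Finsupp.single a (1 : ZMod 2) = e a := rfl
        have hb : Finsupp.single b (1 : ZMod 2) = e b := rfl
        rw [ha, hb, Tlin_e, Tlin_e, symp_core]

/-- `T_i : V_{D-2} → V_D` preserves the symplectic form. -/
theorem stmt15 (D i : ℕ) (hD : 2 ≤ D) (h1 : 1 ≤ i) (h2 : i ≤ D)
    (x y : Vec) (hx : x ∈ VD (D - 2)) (hy : y ∈ VD (D - 2)) :
    symp (Tlin i x) (Tlin i y) = symp x y := symp_Tlin i x y
end
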